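/- Let N \u2265 1, let A \u2208 \u211d^{N\u00d7N}, \u03c3 \u2208 \u211d, \u03c9 \u2208 \u211d^N, and suppose \u03b8_1, \u2026, \u03b8_N : \u211d \u2192 \u211d are differentiable and satisfy the Kuramoto equations \u03b8_i'(t) = \u03c9_i + \u03c3 \u2211_{k=1}^N A_{ik} sin(\u03b8_k(t) \u2212 \u03b8_i(t)) for all t. If the system phase-synchronizes, i.e., \u03b8_i(t) \u2212 \u03b8_j(t) \u2192 0 as t \u2192 \u221e for every pair i, j, then all natural frequencies are equal: \u03c9_i = \u03c9_j for all i, j. In particular, phase synchronization cannot hold for non-identical oscillators. -/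

import Mathlib

open Finset Real Filter

/-- If a differentiable function tends to `0` at `+∞` and its derivative tends
to `L`, then `L = 0`. -/
lemma deriv_limit_eq_zero (f : ℝ → ℝ) (hf : Differentiable ℝ f)
    (h0 : Tendsto f atTop (nhds 0)) (L : ℝ)
    (hL : Tendsto (deriv f) atTop (nhds L)) : L = 0 := by
  have key : ∀ n : ℕ, ∃ c ∈ Set.Ioo (n : ℝ) (n + 1),
      deriv f c = (f (n + 1) - f n) / ((n : ℝ) + 1 - n) := by
    intro n
    exact exists_deriv_eq_slope f (by linarith) (hf.continuous.continuousOn)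
      (fun x _ => hf.differentiableAt.differentiableWithinAt)
  choose c hc hderiv using key
  have hc_top : Tendsto c atTop atTop :=
    tendsto_atTop_mono (fun n => (hc n).1.le) tendsto_natCast_atTop_atTop
  have h1 : Tendsto (fun n => deriv f (c n)) atTop (nhds L) := hL.comp hc_top
  have h2 : Tendsto (fun n : ℕ => deriv f (c n)) atTop (nhds 0) := by
    have : Tendsto (fun n : ℕ => (f (n + 1) - f n) / ((n : ℝ) + 1 - n))
        atTop (nhds 0) := by
      have ha : Tendsto (fun n : ℕ => f ((n : ℝ) + 1)) atTop (nhds 0) :=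
        h0.comp (tendsto_atTop_add_const_right _ 1 tendsto_natCast_atTop_atTop)
      have hb : Tendsto (fun n : ℕ => f (n : ℝ)) atTop (nhds 0) :=
        h0.comp tendsto_natCast_atTop_atTop
      simpa using (ha.sub hb)
    exact this.congr fun n => (hderiv n).symm
  exact tendsto_nhds_unique h1 h2

/-- If a Kuramoto system phase-synchronizes (all pairwise phase differences
tend to `0`), then all natural frequencies are equal; in particular phase
synchronization cannot hold for non-identical oscillators. -/
theorem kuramoto_phase_sync_implies_identical (N : ℕ) (hN : 1 ≤ N)
    (A : Fin N → Fin N → ℝ) (σ : ℝ) (ω : Fin N → ℝ) (θ : Fin N → ℝ → ℝ)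
    (hdiff : ∀ i, Differentiable ℝ (θ i))
    (hode : ∀ i t, deriv (θ i) t
      = ω i + σ * ∑ k : Fin N, A i k * Real.sin (θ k t - θ i t))
    (hsync : ∀ i j, Tendsto (fun t => θ i t - θ j t) atTop (nhds 0)) :
    ∀ i j, ω i = ω j := by
  intro i j
  set f : ℝ → ℝ := fun t => θ i t - θ j t with hf_def
  have hf : Differentiable ℝ f := (hdiff i).sub (hdiff j)
  have hderiv : ∀ t, deriv f t = (ω i - ω j)
      + (σ * ∑ k : Fin N, A i k * Real.sin (θ k t - θ i t)
         - σ * ∑ k : Fin N, A j k * Real.sin (θ k t - θ j t)) := by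
    intro t
    have : deriv f t = deriv (θ i) t - deriv (θ j) t := by
      simpa [hf_def] using
        deriv_fun_sub (hdiff i).differentiableAt (hdiff j).differentiableAt
    rw [this, hode i t, hode j t]; ring
  -- each sine term tends to 0
  have hsin : ∀ (a b : Fin N),
      Tendsto (fun t => Real.sin (θ a t - θ b t)) atTop (nhds 0) := by
    intro a b
    have := (Real.continuous_sin.tendsto 0).comp (hsync a b)
    simpa [Function.comp_def] using this
  have hsum : ∀ (a : Fin N),
      Tendsto (fun t => σ * ∑ k : Fin N, A a k * Real.sin (θ k t - θ a t))
        atTop (nhds 0) := by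
    intro a
    have : Tendsto (fun t => ∑ k : Fin N, A a k * Real.sin (θ k t - θ a t))
        atTop (nhds 0) := by
      have := tendsto_finset_sum (Finset.univ : Finset (Fin N))
        (fun k _ => (tendsto_const_nhds (x := A a k)).mul (hsin k a))
      simpa using this
    simpa using (tendsto_const_nhds (x := σ)).mul this
  have hLd : Tendsto (deriv f) atTop (nhds (ω i - ω j)) := by
    have : Tendsto (fun t => (ω i - ω j)
        + (σ * ∑ k : Fin N, A i k * Real.sin (θ k t - θ i t)
           - σ * ∑ k : Fin N, A j k * Real.sin (θ k t - θ j t)))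
        atTop (nhds ((ω i - ω j) + (0 - 0))) :=
      tendsto_const_nhds.add ((hsum i).sub (hsum j))
    simpa [hderiv] using this.congr fun t => (hderiv t).symm
  have := deriv_limit_eq_zero f hf (hsync i j) (ω i - ω j) hLd
  linarith
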